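/- arXiv:1103.4299 — 4 statements merged into one kernel-verified Lean document; each statement's English description precedes it below -/
import Mathlib

section
/- Let π₁, π₂ be orthogonal representations of a group Γ on real Hilbert spaces H₁, H₂, and let q₁, q₂ be arrays for π₁, π₂ respectively (i.e., for each γ there is a bound r'(γ) with ‖qᵢ(γλ) − (πᵢ)_γ(qᵢ(λ))‖ ≤ r'(γ) for all λ). With κ(γ) = max(‖q₁(γ)‖, ‖q₂(γ)‖) + 1, the map q(γ) = κ(γ)⁻¹ · q₁(γ) ⊗ q₂(γ) into H₁ ⊗ H₂ satisfies: for every γ there is a constant C(γ) such that ‖q(γλ) − (π₁ ⊗ π₂)_γ(q(λ))‖ ≤ C(γ) for all λ ∈ Γ; explicitly one may take C(γ) = 2 r'(γ) + max(r'(γ), r'(γ⁻¹)). -/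
open RealInnerProductSpace

/-- The normalized tensor product of two arrays is again boundedly equivariant, for the
tensor product representation.  The Hilbert space tensor product `H₁ ⊗ H₂` is encoded as a
space `H₃` together with a bilinear map `tens` satisfying the tensor inner product identity,
and the tensor representation is a representation `ρ` on `H₃` compatible with `tens`. -/
theorem tensor_of_arrays_boundedly_equivariant
    {Γ : Type*} [Group Γ]
    {H₁ : Type*} [NormedAddCommGroup H₁] [InnerProductSpace ℝ H₁] [CompleteSpace H₁]
    {H₂ : Type*} [NormedAddCommGroup H₂] [InnerProductSpace ℝ H₂] [CompleteSpace H₂]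
    {H₃ : Type*} [NormedAddCommGroup H₃] [InnerProductSpace ℝ H₃] [CompleteSpace H₃]
    (π₁ : Γ →* (H₁ ≃ₗᵢ[ℝ] H₁)) (π₂ : Γ →* (H₂ ≃ₗᵢ[ℝ] H₂)) (ρ : Γ →* (H₃ ≃ₗᵢ[ℝ] H₃))
    (tens : H₁ →ₗ[ℝ] H₂ →ₗ[ℝ] H₃)
    (hinner : ∀ (a c : H₁) (b d : H₂), (inner ℝ (tens a b) (tens c d) : ℝ) = (inner ℝ a c : ℝ) * (inner ℝ b d : ℝ))
    (hρ : ∀ (γ : Γ) (x : H₁) (y : H₂), ρ γ (tens x y) = tens (π₁ γ x) (π₂ γ y))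
    (q₁ : Γ → H₁) (q₂ : Γ → H₂) (r' : Γ → ℝ)
    (h1 : ∀ γ lam : Γ, ‖q₁ (γ * lam) - π₁ γ (q₁ lam)‖ ≤ r' γ)
    (h2 : ∀ γ lam : Γ, ‖q₂ (γ * lam) - π₂ γ (q₂ lam)‖ ≤ r' γ) :
    ∀ γ lam : Γ,
      ‖(max ‖q₁ (γ * lam)‖ ‖q₂ (γ * lam)‖ + 1)⁻¹ • tens (q₁ (γ * lam)) (q₂ (γ * lam))
          - ρ γ ((max ‖q₁ lam‖ ‖q₂ lam‖ + 1)⁻¹ • tens (q₁ lam) (q₂ lam))‖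
        ≤ 2 * r' γ + max (r' γ) (r' γ⁻¹) := by
  have hnorm : ∀ (x : H₁) (y : H₂), ‖tens x y‖ = ‖x‖ * ‖y‖ := by
    intro x y
    have h := hinner x x y y
    rw [real_inner_self_eq_norm_mul_norm, real_inner_self_eq_norm_mul_norm,
      real_inner_self_eq_norm_mul_norm] at h
    nlinarith [norm_nonneg (tens x y), mul_nonneg (norm_nonneg x) (norm_nonneg y)]
  intro γ lam
  set a := q₁ (γ * lam) with ha
  set b := q₂ (γ * lam) with hb
  set a' := (π₁ γ) (q₁ lam) with ha'
  set b' := (π₂ γ) (q₂ lam) with hb'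
  have hna' : ‖a'‖ = ‖q₁ lam‖ := (π₁ γ).norm_map _
  have hnb' : ‖b'‖ = ‖q₂ lam‖ := (π₂ γ).norm_map _
  set κ : ℝ := max ‖a‖ ‖b‖ + 1 with hκ
  set κ' : ℝ := max ‖q₁ lam‖ ‖q₂ lam‖ + 1 with hκ'
  have hκpos : 0 < κ := by positivity
  have hκ'pos : 0 < κ' := by positivity
  have hρeq : ρ γ (κ'⁻¹ • tens (q₁ lam) (q₂ lam)) = κ'⁻¹ • tens a' b' := by
    rw [map_smul, hρ]
  rw [hρeq]
  have hdecomp : κ⁻¹ • tens a b - κ'⁻¹ • tens a' b'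
      = κ⁻¹ • tens (a - a') b + κ'⁻¹ • tens a' (b - b')
        + (κ⁻¹ - κ'⁻¹) • tens a' b := by
    rw [map_sub, LinearMap.sub_apply, map_sub]
    module
  rw [hdecomp]
  have hr : 0 ≤ r' γ := le_trans (norm_nonneg _) (h1 γ 1)
  have h1' := h1 γ lam
  have h2' := h2 γ lam
  have hbκ : ‖b‖ ≤ κ := by
    have := le_max_right ‖a‖ ‖b‖; linarith
  have haκ' : ‖a'‖ ≤ κ' := by
    rw [hna']; have := le_max_left ‖q₁ lam‖ ‖q₂ lam‖; linarith
  -- |κ - κ'| ≤ r' γ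
  have hκκ' : |κ - κ'| ≤ r' γ := by
    have h3 : |max ‖a‖ ‖b‖ - max ‖q₁ lam‖ ‖q₂ lam‖|
        ≤ max |‖a‖ - ‖q₁ lam‖| |‖b‖ - ‖q₂ lam‖| := abs_max_sub_max_le_max _ _ _ _
    have h4 : |‖a‖ - ‖q₁ lam‖| ≤ r' γ := by
      rw [← hna']; exact le_trans (abs_norm_sub_norm_le _ _) h1'
    have h5 : |‖b‖ - ‖q₂ lam‖| ≤ r' γ := by
      rw [← hnb']; exact le_trans (abs_norm_sub_norm_le _ _) h2'
    have : κ - κ' = max ‖a‖ ‖b‖ - max ‖q₁ lam‖ ‖q₂ lam‖ := by rw [hκ, hκ']; ring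
    rw [this]
    exact le_trans h3 (max_le h4 h5)
  have T1 : ‖κ⁻¹ • tens (a - a') b‖ ≤ r' γ := by
    rw [norm_smul, hnorm, norm_inv, Real.norm_eq_abs, abs_of_pos hκpos]
    rw [inv_mul_le_iff₀ hκpos]
    calc ‖a - a'‖ * ‖b‖ ≤ r' γ * κ := by
          apply mul_le_mul h1' hbκ (norm_nonneg _) hr
      _ = κ * r' γ := by ring
  have T2 : ‖κ'⁻¹ • tens a' (b - b')‖ ≤ r' γ := by
    rw [norm_smul, hnorm, norm_inv, Real.norm_eq_abs, abs_of_pos hκ'pos]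
    rw [inv_mul_le_iff₀ hκ'pos]
    exact mul_le_mul haκ' h2' (norm_nonneg _) (le_of_lt hκ'pos)
  have T3 : ‖(κ⁻¹ - κ'⁻¹) • tens a' b‖ ≤ r' γ := by
    rw [norm_smul, hnorm, Real.norm_eq_abs]
    have h6 : |κ⁻¹ - κ'⁻¹| = |κ' - κ| / (κ * κ') := by
      rw [inv_sub_inv (ne_of_gt hκpos) (ne_of_gt hκ'pos), abs_div,
        abs_of_pos (mul_pos hκpos hκ'pos)]
    rw [h6]
    have h7 : |κ' - κ| ≤ r' γ := by rw [abs_sub_comm]; exact hκκ'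
    have step : |κ' - κ| / (κ * κ') * (‖a'‖ * ‖b‖) ≤ r' γ / (κ * κ') * (κ' * κ) := by
      gcongr
    have eq1 : r' γ / (κ * κ') * (κ' * κ) = r' γ := by
      have hone : (κ' * κ) / (κ * κ') = 1 := by
        rw [mul_comm κ' κ]; exact div_self (by positivity)
      rw [div_mul_eq_mul_div, mul_div_assoc, hone, mul_one]
    linarith
  have h8 := norm_add_le (κ⁻¹ • tens (a - a') b + κ'⁻¹ • tens a' (b - b'))
    ((κ⁻¹ - κ'⁻¹) • tens a' b)
  have h9 := norm_add_le (κ⁻¹ • tens (a - a') b) (κ'⁻¹ • tens a' (b - b'))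
  have hmax : r' γ ≤ max (r' γ) (r' γ⁻¹) := le_max_left _ _
  linarith
end

section
/- Spectral gap bounds symmetric arrays on commuting subgroups: let π : G → O(H) be an orthogonal representation of a group G, S ⊆ G a finite symmetric subset, and K > 0 a constant such that ‖ξ‖ ≤ K Σ_{s ∈ S} ‖π_s(ξ) − ξ‖ for all ξ ∈ H. Let q : G → H be a symmetric map (π_γ(q(γ⁻¹)) = q(γ) for all γ) satisfying ‖π_s(q(δ)) − q(sδ)‖ ≤ K for all s ∈ S, δ ∈ G. Then for every g ∈ G that commutes with every element of S, one has ‖q(g)‖ ≤ 2 K² |S|. -/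
/-- Spectral gap bounds symmetric arrays on elements commuting with the gap set. -/
theorem spectral_gap_bounds_symmetric_array
    {G : Type*} [Group G] {H : Type*} [NormedAddCommGroup H] [InnerProductSpace ℝ H]
    [CompleteSpace H]
    (π : G →* (H ≃ₗᵢ[ℝ] H)) (S : Finset G) (hSsym : ∀ s ∈ S, s⁻¹ ∈ S)
    (K : ℝ) (hK : 0 < K)
    (hgap : ∀ ξ : H, ‖ξ‖ ≤ K * ∑ s ∈ S, ‖π s ξ - ξ‖)
    (q : G → H) (hsymm : ∀ γ : G, π γ (q γ⁻¹) = q γ)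
    (hequiv : ∀ s ∈ S, ∀ δ : G, ‖π s (q δ) - q (s * δ)‖ ≤ K)
    (g : G) (hg : ∀ s ∈ S, s * g = g * s) :
    ‖q g‖ ≤ 2 * K ^ 2 * S.card := by
  have comp : ∀ (a b : G) (x : H), π a (π b x) = π (a * b) x := by
    intro a b x; rw [map_mul]; rfl
  have key : ∀ s ∈ S, ‖π s (q g) - q g‖ ≤ 2 * K := by
    intro s hs
    have h1 : ‖π s (q g) - q (s * g)‖ ≤ K := hequiv s hs g
    have e1 : π g⁻¹ (q g) = q g⁻¹ := by
      conv_lhs => rw [← hsymm g]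
      rw [comp, inv_mul_cancel, map_one]; rfl
    have e2 : π g⁻¹ (q (g * s)) = π s (q (s⁻¹ * g⁻¹)) := by
      conv_lhs => rw [← hsymm (g * s)]
      rw [comp, mul_inv_rev]
      congr 1
      group
    have h2 : ‖q (g * s) - q g‖ ≤ K := by
      calc ‖q (g * s) - q g‖ = ‖π g⁻¹ (q (g * s)) - π g⁻¹ (q g)‖ := by
            rw [← map_sub, LinearIsometryEquiv.norm_map]
        _ = ‖π s (q (s⁻¹ * g⁻¹)) - q (s * (s⁻¹ * g⁻¹))‖ := by
            rw [e1, e2, mul_inv_cancel_left]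
        _ ≤ K := hequiv s hs _
    calc ‖π s (q g) - q g‖
        = ‖(π s (q g) - q (s * g)) + (q (s * g) - q g)‖ := by abel_nf
      _ ≤ ‖π s (q g) - q (s * g)‖ + ‖q (s * g) - q g‖ := norm_add_le _ _
      _ ≤ K + K := by
          refine add_le_add h1 ?_
          rw [hg s hs]; exact h2
      _ = 2 * K := by ring
  calc ‖q g‖ ≤ K * ∑ s ∈ S, ‖π s (q g) - q g‖ := hgap (q g)
    _ ≤ K * ∑ s ∈ S, 2 * K := by
        exact mul_le_mul_of_nonneg_left (Finset.sum_le_sum key) hK.le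
    _ = 2 * K ^ 2 * S.card := by
        rw [Finset.sum_const]
        push_cast
        ring
end

section
/- If an infinite group Γ admits a map q : Γ → H into a real Hilbert space such that γ ↦ ‖q(γ)‖ is proper (sublevel sets are finite) and there exists a constant K with ‖π_γ(q(γ⁻¹)) − q(γ)‖ ≤ K for all γ (approximate symmetry under an orthogonal representation π), then for each fixed γ ∈ Γ there is a constant K(γ) such that ‖q(γ⁻¹ δ γ) − π_{γ⁻¹}(q(δ))‖ ≤ K(γ) for all δ ∈ Γ, provided q is boundedly equivariant (for each finite F ⊆ Γ there is K_F with ‖π_g(q(δ)) − q(gδ)‖ ≤ K_F for g ∈ F, δ ∈ Γ). -/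
/-- Conjugation-equivariance estimate for a proper, approximately symmetric, boundedly
equivariant map into a Hilbert space. -/
theorem conjugation_equivariance_estimate
    {Γ : Type*} [Group Γ] [Countable Γ] [Infinite Γ]
    {H : Type*} [NormedAddCommGroup H] [InnerProductSpace ℝ H] [CompleteSpace H]
    (π : Γ →* (H ≃ₗᵢ[ℝ] H)) (q : Γ → H)
    (hproper : ∀ C > (0 : ℝ), {γ : Γ | ‖q γ‖ ≤ C}.Finite)
    (K : ℝ) (hsym : ∀ γ : Γ, ‖π γ (q γ⁻¹) - q γ‖ ≤ K)
    (hbe : ∀ F : Finset Γ, ∃ KF : ℝ, ∀ g ∈ F, ∀ δ : Γ, ‖π g (q δ) - q (g * δ)‖ ≤ KF) :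
    ∀ γ : Γ, ∃ Kγ : ℝ, ∀ δ : Γ,
      ‖q (γ⁻¹ * δ * γ) - π γ⁻¹ (q δ)‖ ≤ Kγ := by
  intro γ
  obtain ⟨KF, hKF⟩ := hbe {γ⁻¹}
  have hmem : γ⁻¹ ∈ ({γ⁻¹} : Finset Γ) := Finset.mem_singleton_self _
  refine ⟨2 * K + 2 * KF, fun δ => ?_⟩
  -- composition identity
  have comp : ∀ x : H, π (δ * γ) (π γ⁻¹ x) = π δ x := by
    intro x
    have : π δ = π (δ * γ) * π γ⁻¹ := by
      rw [← map_mul]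
      congr 1
      group
    rw [this]
    rfl
  -- right-translation bound
  have h2 : ‖q (δ * γ) - q δ‖ ≤ 2 * K + KF := by
    have a1 : ‖π (δ * γ) (q ((δ * γ)⁻¹)) - q (δ * γ)‖ ≤ K := hsym _
    have a2 : ‖π γ⁻¹ (q δ⁻¹) - q (γ⁻¹ * δ⁻¹)‖ ≤ KF := hKF _ hmem _
    have a3 : ‖π δ (q δ⁻¹) - q δ‖ ≤ K := hsym δ
    have a2' : ‖π (δ * γ) (π γ⁻¹ (q δ⁻¹)) - π (δ * γ) (q (γ⁻¹ * δ⁻¹))‖ ≤ KF := by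
      rw [← map_sub, (π (δ * γ)).norm_map]
      exact a2
    have key : q (δ * γ) - q δ =
        (q (δ * γ) - π (δ * γ) (q ((δ * γ)⁻¹)))
        + (π (δ * γ) (q (γ⁻¹ * δ⁻¹)) - π (δ * γ) (π γ⁻¹ (q δ⁻¹)))
        + (π δ (q δ⁻¹) - q δ) := by
      rw [comp, mul_inv_rev]
      abel
    calc ‖q (δ * γ) - q δ‖
        ≤ ‖q (δ * γ) - π (δ * γ) (q ((δ * γ)⁻¹))‖
          + ‖π (δ * γ) (q (γ⁻¹ * δ⁻¹)) - π (δ * γ) (π γ⁻¹ (q δ⁻¹))‖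
          + ‖π δ (q δ⁻¹) - q δ‖ := by
            rw [key]; exact norm_add₃_le
      _ ≤ K + KF + K := by
            have := norm_sub_rev (π (δ * γ) (π γ⁻¹ (q δ⁻¹))) (π (δ * γ) (q (γ⁻¹ * δ⁻¹)))
            gcongr
            · rw [norm_sub_rev]; exact a1
            · rw [norm_sub_rev]; exact a2'
      _ = 2 * K + KF := by ring
  have h1 : ‖π γ⁻¹ (q (δ * γ)) - q (γ⁻¹ * (δ * γ))‖ ≤ KF := hKF _ hmem _
  have h2' : ‖π γ⁻¹ (q (δ * γ)) - π γ⁻¹ (q δ)‖ ≤ 2 * K + KF := by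
    rw [← map_sub, (π γ⁻¹).norm_map]; exact h2
  have key2 : q (γ⁻¹ * δ * γ) - π γ⁻¹ (q δ) =
      (q (γ⁻¹ * (δ * γ)) - π γ⁻¹ (q (δ * γ)))
      + (π γ⁻¹ (q (δ * γ)) - π γ⁻¹ (q δ)) := by
    rw [mul_assoc]; abel
  calc ‖q (γ⁻¹ * δ * γ) - π γ⁻¹ (q δ)‖
      ≤ ‖q (γ⁻¹ * (δ * γ)) - π γ⁻¹ (q (δ * γ))‖
        + ‖π γ⁻¹ (q (δ * γ)) - π γ⁻¹ (q δ)‖ := by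
          rw [key2]; exact norm_add_le _ _
    _ ≤ KF + (2 * K + KF) := by
          gcongr
          rw [norm_sub_rev]; exact h1
    _ = 2 * K + 2 * KF := by ring
end

section
/- Positive semidefiniteness of Gaussian kernels on Hilbert space (finite Schoenberg): for any real Hilbert space H, any finite list of vectors v₁, …, vₙ ∈ H, and any t ∈ ℝ, the n × n real matrix A with entries A_{ij} = exp(−t² ‖vᵢ − vⱼ‖²) is positive semidefinite: Σ_{i,j} cᵢ cⱼ exp(−t² ‖vᵢ − vⱼ‖²) ≥ 0 for all real c₁, …, cₙ. -/
open Finset Nat Matrix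

private lemma pow_kernel_nonneg {n : ℕ} (B : Matrix (Fin n) (Fin n) ℝ) (k : ℕ) :
    ∀ d : Fin n → ℝ, 0 ≤ ∑ i, ∑ j, d i * d j * (∑ l, B l i * B l j) ^ k := by
  induction k with
  | zero =>
    intro d
    have : ∑ i, ∑ j, d i * d j * (∑ l, B l i * B l j) ^ 0 = (∑ i, d i) ^ 2 := by
      rw [sq, Finset.sum_mul_sum]
      simp
    rw [this]
    positivity
  | succ k ih =>
    intro d
    have h : ∀ i j : Fin n,
        d i * d j * (∑ l, B l i * B l j) ^ (k + 1)
          = ∑ l, (d i * B l i) * (d j * B l j) * (∑ m, B m i * B m j) ^ k := by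
      intro i j
      rw [pow_succ, Finset.mul_sum, Finset.mul_sum]
      exact Finset.sum_congr rfl fun l _ => by ring
    simp_rw [h]
    have swap : ∑ i : Fin n, ∑ j : Fin n, ∑ l : Fin n,
          (d i * B l i) * (d j * B l j) * (∑ m, B m i * B m j) ^ k
        = ∑ l : Fin n, ∑ i : Fin n, ∑ j : Fin n,
          (d i * B l i) * (d j * B l j) * (∑ m, B m i * B m j) ^ k := by
      rw [show (∑ i : Fin n, ∑ j : Fin n, ∑ l : Fin n,
            (d i * B l i) * (d j * B l j) * (∑ m, B m i * B m j) ^ k)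
          = ∑ i : Fin n, ∑ l : Fin n, ∑ j : Fin n,
            (d i * B l i) * (d j * B l j) * (∑ m, B m i * B m j) ^ k from
        Finset.sum_congr rfl fun i _ => Finset.sum_comm, Finset.sum_comm]
    rw [swap]
    exact Finset.sum_nonneg fun l _ => ih (fun i => d i * B l i)

private lemma exp_kernel_nonneg {n : ℕ} (B : Matrix (Fin n) (Fin n) ℝ) (s : ℝ) (hs : 0 ≤ s)
    (d : Fin n → ℝ) :
    0 ≤ ∑ i, ∑ j, d i * d j * Real.exp (s * ∑ l, B l i * B l j) := by
  have hexp : ∀ x : ℝ, Real.exp x = ∑' k : ℕ, x ^ k / k ! := fun x => by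
    rw [Real.exp_eq_exp_ℝ, NormedSpace.exp_eq_tsum_div]
  have hsum : ∀ i j : Fin n, Summable fun k : ℕ =>
      d i * d j * ((s * ∑ l, B l i * B l j) ^ k / k !) := fun i j =>
    (Real.summable_pow_div_factorial _).mul_left _
  simp_rw [hexp, ← tsum_mul_left]
  rw [show (∑ i : Fin n, ∑ j : Fin n, ∑' k : ℕ,
        d i * d j * ((s * ∑ l, B l i * B l j) ^ k / k !))
      = ∑' k : ℕ, ∑ i : Fin n, ∑ j : Fin n,
        d i * d j * ((s * ∑ l, B l i * B l j) ^ k / k !) from by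
    rw [Summable.tsum_finsetSum fun i _ => summable_sum fun j _ => hsum i j]
    exact Finset.sum_congr rfl fun i _ => (Summable.tsum_finsetSum fun j _ => hsum i j).symm]
  refine tsum_nonneg fun k => ?_
  have : ∑ i : Fin n, ∑ j : Fin n, d i * d j * ((s * ∑ l, B l i * B l j) ^ k / k !)
      = (s ^ k / k !) * ∑ i : Fin n, ∑ j : Fin n, d i * d j * (∑ l, B l i * B l j) ^ k := by
    rw [Finset.mul_sum]
    refine Finset.sum_congr rfl fun i _ => ?_
    rw [Finset.mul_sum]
    exact Finset.sum_congr rfl fun j _ => by rw [mul_pow]; ring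
  rw [this]
  have h1 : (0:ℝ) ≤ s ^ k / k ! := by positivity
  exact mul_nonneg h1 (pow_kernel_nonneg B k d)

/-- Finite Schoenberg theorem: Gaussian kernels on a real Hilbert space are positive
semidefinite. -/
theorem gaussian_kernel_posdef
    {H : Type*} [NormedAddCommGroup H] [InnerProductSpace ℝ H] [CompleteSpace H]
    (n : ℕ) (v : Fin n → H) (t : ℝ) (c : Fin n → ℝ) :
    0 ≤ ∑ i, ∑ j, c i * c j * Real.exp (-(t ^ 2) * ‖v i - v j‖ ^ 2) := by
  classical
  set M : Matrix (Fin n) (Fin n) ℝ := Matrix.of fun i j => (inner ℝ (v i) (v j) : ℝ) with hM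
  have hGram : M.PosSemidef := by
    refine Matrix.PosSemidef.of_dotProduct_mulVec_nonneg ?_ ?_
    · ext i j
      simp [M, Matrix.conjTranspose_apply, real_inner_comm]
    · intro x
      have hdot : dotProduct (star x) (M *ᵥ x)
          = (inner ℝ (∑ i, x i • v i) (∑ j, x j • v j) : ℝ) := by
        have h1 : (inner ℝ (∑ i, x i • v i) (∑ j, x j • v j) : ℝ)
            = ∑ i, ∑ j, x i * (x j * (inner ℝ (v i) (v j) : ℝ)) := by
          simp_rw [sum_inner, inner_sum, real_inner_smul_left, real_inner_smul_right]
        rw [h1]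
        simp only [dotProduct, Matrix.mulVec, M, Finset.mul_sum, star_trivial, Matrix.of_apply]
        exact Finset.sum_congr rfl fun i _ => Finset.sum_congr rfl fun j _ => by ring
      rw [hdot]
      exact real_inner_self_nonneg
  obtain ⟨B, hB⟩ : ∃ B : Matrix (Fin n) (Fin n) ℝ, M = Bᴴ * B := by
    open scoped MatrixOrder in exact CStarAlgebra.nonneg_iff_eq_star_mul_self.mp hGram.nonneg
  have hBij : ∀ i j, (inner ℝ (v i) (v j) : ℝ) = ∑ l, B l i * B l j := by
    intro i j
    have := congrFun (congrFun (congrArg Matrix.of.symm hB) i) j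
    simpa [M, Matrix.mul_apply, Matrix.conjTranspose_apply] using
      congrFun (congrFun hB i) j
  set d : Fin n → ℝ := fun i => c i * Real.exp (-(t ^ 2) * ‖v i‖ ^ 2) with hd
  have key : ∀ i j, c i * c j * Real.exp (-(t ^ 2) * ‖v i - v j‖ ^ 2)
      = d i * d j * Real.exp ((2 * t ^ 2) * ∑ l, B l i * B l j) := by
    intro i j
    rw [← hBij i j, @norm_sub_sq_real _ _ _ (v i) (v j)]
    have harg : -(t ^ 2) * (‖v i‖ ^ 2 - 2 * (inner ℝ (v i) (v j) : ℝ) + ‖v j‖ ^ 2)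
        = (-(t ^ 2) * ‖v i‖ ^ 2) + ((-(t ^ 2) * ‖v j‖ ^ 2)
            + (2 * t ^ 2) * (inner ℝ (v i) (v j) : ℝ)) := by ring
    rw [harg, Real.exp_add, Real.exp_add, hd]
    ring
  simp_rw [key]
  exact exp_kernel_nonneg B (2 * t ^ 2) (by positivity) d
end
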